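/- Let S be the smallest set of functions ℝ → ℝ containing g₂(t) = 1 - t/2 and closed under pointwise addition and composition. Then every affine function t ↦ a·t + b with dyadic rational coefficients a and b belongs to S. -/

import Mathlib

theorem stmt4 (S : Set (ℝ → ℝ))
    (hg₂ : (fun t : ℝ => 1 - t / 2) ∈ S)
    (hadd : ∀ f ∈ S, ∀ h ∈ S, (f + h) ∈ S)
    (hcomp : ∀ f ∈ S, ∀ h ∈ S, (f ∘ h) ∈ S)
    (hmin : ∀ T : Set (ℝ → ℝ), (fun t : ℝ => 1 - t / 2) ∈ T →
      (∀ f ∈ T, ∀ h ∈ T, (f + h) ∈ T) →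
      (∀ f ∈ T, ∀ h ∈ T, (f ∘ h) ∈ T) → S ⊆ T) :
    ∀ a b : ℝ, (∃ (m : ℤ) (r : ℕ), a = (m : ℝ) / 2 ^ r) →
      (∃ (m : ℤ) (r : ℕ), b = (m : ℝ) / 2 ^ r) →
      (fun t : ℝ => a * t + b) ∈ S := by
  -- d(t) = 2 - t
  have hd : (fun t : ℝ => 2 - t) ∈ S := by
    have := hadd _ hg₂ _ hg₂
    convert this using 1; funext t; simp [Pi.add_apply]; ring
  -- id
  have hid : (fun t : ℝ => t) ∈ S := by
    have := hcomp _ hd _ hd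
    convert this using 1; funext t; simp [Function.comp]
  -- h(t) = t/2
  have hh : (fun t : ℝ => t / 2) ∈ S := by
    have := hcomp _ hg₂ _ hd
    convert this using 1; funext t; simp [Function.comp]; ring
  -- const 2
  have hc2 : (fun _ : ℝ => (2 : ℝ)) ∈ S := by
    have := hadd _ hid _ hd
    convert this using 1; funext t; simp [Pi.add_apply]
  -- const 0
  have hc0 : (fun _ : ℝ => (0 : ℝ)) ∈ S := by
    have := hcomp _ hd _ hc2
    convert this using 1; funext t; simp [Function.comp]
  -- const 1
  have hc1 : (fun _ : ℝ => (1 : ℝ)) ∈ S := by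
    have := hcomp _ hh _ hc2
    convert this using 1; funext t; simp [Function.comp]
  -- const (-1)
  have hcm1 : (fun _ : ℝ => (-1 : ℝ)) ∈ S := by
    have h3 : (fun _ : ℝ => (3 : ℝ)) ∈ S := by
      have := hadd _ hc1 _ hc2
      convert this using 1; funext t; simp [Pi.add_apply]; norm_num
    have := hcomp _ hd _ h3
    convert this using 1; funext t; simp [Function.comp]; norm_num
  -- integer constants
  have hcint : ∀ n : ℤ, (fun _ : ℝ => (n : ℝ)) ∈ S := by
    intro n
    induction n using Int.induction_on with
    | zero => simpa using hc0
    | succ k ih =>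
        have := hadd _ ih _ hc1
        convert this using 1; funext t; simp [Pi.add_apply]
    | pred k ih =>
        have := hadd _ ih _ hcm1
        convert this using 1; funext t; simp [Pi.add_apply]; push_cast; ring
  -- dyadic constants
  have hcdy : ∀ (m : ℤ) (r : ℕ), (fun _ : ℝ => (m : ℝ) / 2 ^ r) ∈ S := by
    intro m r
    induction r with
    | zero => simpa using hcint m
    | succ r ih =>
        have := hcomp _ hh _ ih
        convert this using 1; funext t; simp [Function.comp]; ring
  -- t / 2^r
  have hpow : ∀ r : ℕ, (fun t : ℝ => t / 2 ^ r) ∈ S := by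
    intro r
    induction r with
    | zero => simpa using hid
    | succ r ih =>
        have := hcomp _ hh _ ih
        convert this using 1; funext t; simp [Function.comp]; ring
  -- neg
  have hneg : (fun t : ℝ => -t) ∈ S := by
    have hm2 : (fun _ : ℝ => (-2 : ℝ)) ∈ S := by
      have := hcint (-2); simpa using this
    have := hadd _ hd _ hm2
    convert this using 1; funext t; simp [Pi.add_apply]; ring
  -- dyadic linear functions
  have hlin : ∀ (m : ℤ) (r : ℕ), (fun t : ℝ => (m : ℝ) / 2 ^ r * t) ∈ S := by
    intro m r
    induction m using Int.induction_on with
    | zero => simpa using hc0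
    | succ k ih =>
        have := hadd _ ih _ (hpow r)
        convert this using 1; funext t; simp [Pi.add_apply]; push_cast; ring
    | pred k ih =>
        have hnp : (fun t : ℝ => -(t / 2 ^ r)) ∈ S := by
          have := hcomp _ hneg _ (hpow r)
          convert this using 1
          rfl
        have := hadd _ ih _ hnp
        convert this using 1; funext t; simp [Pi.add_apply]; push_cast; ring
  rintro a b ⟨m, r, rfl⟩ ⟨n, s, rfl⟩
  have := hadd _ (hlin m r) _ (hcdy n s)
  convert this using 1
  rfl
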